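/- Uniform penalty error bound for small switching cost: suppose F is locally Lipschitz continuous and the penalty function is π(y) = max(y, 0). For c > 0 and ρ > 0, let u^c be the solution of the QVI with switching cost c and let u^{c,ρ} be the solution of the penalized equation with penalty parameter ρ and switching cost c. Then there exists a constant C₁ > 0, independent of c and ρ, such that 0 ≤ u^c − u^{c,ρ} ≤ C₁(1/ρ + cρ) componentwise for all c > 0 and ρ > 0. -/

import Mathlib

open Filter Topology

noncomputable section

/-- A monotone system with constant `γ`: whenever `u i l - v i l` is the (nonnegative)
maximum of all differences, `F u i l - F v i l ≥ γ (u i l - v i l)`. -/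
def IsMonotoneSystem {N d : ℕ} (γ : ℝ)
    (F : (Fin d → Fin N → ℝ) → Fin d → Fin N → ℝ) : Prop :=
  ∀ u v : Fin d → Fin N → ℝ, ∀ i : Fin d, ∀ l : Fin N,
    (∀ (j : Fin d) (k : Fin N), u j k - v j k ≤ u i l - v i l) →
    0 ≤ u i l - v i l →
    γ * (u i l - v i l) ≤ F u i l - F v i l

/-- The intervention operator `(M_i u)_l = max_{j ≠ i} (u j l - c)`. -/
def Mop {N d : ℕ} (c : ℝ) (u : Fin d → Fin N → ℝ) (i : Fin d) (l : Fin N) : ℝ :=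
  ⨆ j : {j : Fin d // j ≠ i}, (u j l - c)

/-- The sup-norm `‖u‖ = max_{i,l} |u i l|`. -/
def supNorm {N d : ℕ} (u : Fin d → Fin N → ℝ) : ℝ :=
  ⨆ p : Fin d × Fin N, |u p.1 p.2|

/-- A penalty function: continuous, non-decreasing, vanishing on `(-∞,0]` and
positive on `(0,∞)`. -/
def IsPenaltyFunction (π : ℝ → ℝ) : Prop :=
  Continuous π ∧ Monotone π ∧ (∀ y : ℝ, y ≤ 0 → π y = 0) ∧ (∀ y : ℝ, 0 < y → 0 < π y)

/-- A concave system: each `F_i` is concave (componentwise). -/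
def IsConcaveSystem {N d : ℕ}
    (F : (Fin d → Fin N → ℝ) → Fin d → Fin N → ℝ) : Prop :=
  ∀ (i : Fin d) (u v : Fin d → Fin N → ℝ) (θ : ℝ), 0 ≤ θ → θ ≤ 1 → ∀ l : Fin N,
    θ * F u i l + (1 - θ) * F v i l ≤ F (fun j k => θ * u j k + (1 - θ) * v j k) i l

open Metric NNReal

section aux

variable {N d : ℕ}

lemma aux_ne_nonempty (hd : 2 ≤ d) (i : Fin d) : Nonempty {j : Fin d // j ≠ i} := by
  obtain ⟨j, hj⟩ := Fintype.exists_ne_of_one_lt_card (by simpa using by omega) i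
  exact ⟨⟨j, hj⟩⟩

lemma aux_argmax (hN : 1 ≤ N) (hd : 2 ≤ d) (g : Fin d × Fin N → ℝ) :
    ∃ p, ∀ q, g q ≤ g p := by
  haveI : Nonempty (Fin d) := ⟨⟨0, by omega⟩⟩
  haveI : Nonempty (Fin N) := ⟨⟨0, by omega⟩⟩
  exact Finite.exists_max g

lemma Mop_le (hd : 2 ≤ d) {c b : ℝ} {u : Fin d → Fin N → ℝ} {i : Fin d} {l : Fin N}
    (h : ∀ j, j ≠ i → u j l - c ≤ b) : Mop c u i l ≤ b := by
  haveI := aux_ne_nonempty hd i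
  exact ciSup_le (fun j => h j j.2)

lemma le_Mop {c : ℝ} {u : Fin d → Fin N → ℝ} {i j : Fin d} {l : Fin N} (hj : j ≠ i) :
    u j l - c ≤ Mop c u i l :=
  le_ciSup (f := fun j : {j : Fin d // j ≠ i} => u j l - c)
    (Set.Finite.bddAbove (Set.finite_range _)) ⟨j, hj⟩

lemma Mop_attained (hd : 2 ≤ d) (c : ℝ) (u : Fin d → Fin N → ℝ) (i : Fin d) (l : Fin N) :
    ∃ j, j ≠ i ∧ Mop c u i l = u j l - c := by
  haveI := aux_ne_nonempty hd i
  obtain ⟨j, hj⟩ := Finite.exists_max (fun j : {j : Fin d // j ≠ i} => u j l - c)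
  refine ⟨j, j.2, le_antisymm (ciSup_le hj) (le_Mop j.2)⟩

lemma comp_abs_le_norm (u : Fin d → Fin N → ℝ) (i : Fin d) (l : Fin N) : |u i l| ≤ ‖u‖ :=
  (Real.norm_eq_abs _ ▸ (norm_le_pi_norm (u i) l)).trans (norm_le_pi_norm u i)

end aux

/-- A locally Lipschitz map is Lipschitz on any closed ball (in a proper real normed space). -/
lemma locallyLipschitz_lipschitzOn_closedBall
    {E F' : Type*} [NormedAddCommGroup E] [NormedSpace ℝ E] [ProperSpace E]
    [PseudoMetricSpace F'] (f : E → F') (hf : LocallyLipschitz f) (R : ℝ) (hR : 0 ≤ R) :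
    ∃ L : ℝ, 0 ≤ L ∧ ∀ x ∈ closedBall (0:E) R, ∀ y ∈ closedBall (0:E) R,
      dist (f x) (f y) ≤ L * dist x y := by
  have hchoice : ∀ x : E, ∃ Kr : ℝ≥0 × ℝ, 0 < Kr.2 ∧ LipschitzOnWith Kr.1 f (ball x Kr.2) := by
    intro x
    obtain ⟨K, t, ht, hlip⟩ := hf x
    obtain ⟨ε, hε, hball⟩ := Metric.mem_nhds_iff.1 ht
    exact ⟨(K, ε), hε, hlip.mono hball⟩
  choose Kr hr hlip using hchoice
  set S := closedBall (0:E) R with hS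
  have hScpt : IsCompact S := isCompact_closedBall _ _
  have h0S : (0:E) ∈ S := mem_closedBall_self hR
  obtain ⟨t, -, hcover⟩ := hScpt.elim_nhds_subcover (fun x => ball x ((Kr x).2 / 2))
    (fun x _ => ball_mem_nhds x (by linarith [hr x]))
  have htne : t.Nonempty := by
    rcases Set.mem_iUnion₂.1 (hcover h0S) with ⟨x, hx, -⟩
    exact ⟨x, hx⟩
  set δ : ℝ := t.inf' htne (fun x => (Kr x).2 / 2) with hδdef
  have hδpos : 0 < δ := (Finset.lt_inf'_iff htne).2 (fun x _ => by linarith [hr x])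
  set L : ℝ := max 0 (t.sup' htne (fun x => ((Kr x).1 : ℝ))) with hLdef
  have hL0 : 0 ≤ L := le_max_left _ _
  refine ⟨L, hL0, ?_⟩
  -- short distance estimate
  have hshort : ∀ u ∈ S, ∀ v ∈ S, dist u v ≤ δ → dist (f u) (f v) ≤ L * dist u v := by
    intro u hu v hv huv
    rcases Set.mem_iUnion₂.1 (hcover hu) with ⟨x, hxt, hux⟩
    have hδx : δ ≤ (Kr x).2 / 2 := Finset.inf'_le _ hxt
    have hux' : dist u x < (Kr x).2 / 2 := mem_ball.1 hux
    have huB : u ∈ ball x (Kr x).2 := mem_ball.2 (by linarith)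
    have hvB : v ∈ ball x (Kr x).2 := by
      have : dist v x ≤ dist v u + dist u x := dist_triangle v u x
      have hdvu : dist v u ≤ δ := by rwa [dist_comm]
      exact mem_ball.2 (by linarith)
    have := (hlip x).dist_le_mul u huB v hvB
    refine this.trans (mul_le_mul_of_nonneg_right ?_ dist_nonneg)
    exact le_max_of_le_right (Finset.le_sup' (fun x => ((Kr x).1 : ℝ)) hxt)
  -- general case via segments
  intro u hu v hv
  rcases eq_or_lt_of_le (dist_nonneg (x := u) (y := v)) with hzero | hpos
  · have huv : u = v := by rwa [eq_comm, dist_eq_zero] at hzero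
    simp [huv]
  set n : ℕ := ⌈dist u v / δ⌉₊ with hn
  have hn0 : 0 < n := Nat.ceil_pos.2 (div_pos hpos hδpos)
  have hnR : (0:ℝ) < n := Nat.cast_pos.2 hn0
  have hstep : dist u v / n ≤ δ := by
    rw [div_le_iff₀ hnR]
    calc dist u v = δ * (dist u v / δ) := by field_simp
    _ ≤ δ * n := mul_le_mul_of_nonneg_left (Nat.le_ceil _) hδpos.le
  set z : ℕ → E := fun k => u + ((k : ℝ)/n) • (v - u) with hz
  have hz0 : z 0 = u := by simp [hz]
  have hzn : z n = v := by
    simp only [hz]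
    rw [div_self hnR.ne', one_smul]
    abel
  have hzmem : ∀ k ≤ n, z k ∈ S := by
    intro k hk
    have h1 : (0:ℝ) ≤ (k:ℝ)/n := by positivity
    have h2 : (k:ℝ)/n ≤ 1 := by
      rw [div_le_one hnR]; exact_mod_cast hk
    have := (convex_closedBall (0:E) R) hu hv (by linarith : (0:ℝ) ≤ 1 - (k:ℝ)/n) h1 (by ring)
    convert this using 1
    simp only [hz]
    module
  have hzd : ∀ k, dist (z k) (z (k+1)) = dist u v / n := by
    intro k
    have : z (k+1) - z k = ((1:ℝ)/n) • (v - u) := by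
      simp only [hz]
      push_cast
      match_scalars
      all_goals ring
    rw [dist_eq_norm, ← neg_sub, norm_neg, this, norm_smul, Real.norm_eq_abs,
      abs_of_nonneg (by positivity : (0:ℝ) ≤ 1/(n:ℝ)), dist_eq_norm, ← norm_neg (u - v),
      neg_sub]
    ring
  calc dist (f u) (f v) = dist (f (z 0)) (f (z n)) := by rw [hz0, hzn]
  _ ≤ ∑ k ∈ Finset.range n, dist (f (z k)) (f (z (k+1))) := dist_le_range_sum_dist (fun k => f (z k)) n
  _ ≤ ∑ k ∈ Finset.range n, L * (dist u v / n) := by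
      apply Finset.sum_le_sum
      intro k hk
      have hk' : k < n := Finset.mem_range.1 hk
      have h1 := hshort (z k) (hzmem k hk'.le) (z (k+1)) (hzmem (k+1) hk')
        (by rw [hzd k]; exact hstep)
      rw [hzd k] at h1
      exact h1
  _ = L * dist u v := by
      rw [Finset.sum_const, Finset.card_range, nsmul_eq_mul]
      field_simp

set_option maxHeartbeats 2000000 in
/-- Uniform penalty error bound for small switching cost, for the penalty function
`π(y) = max(y, 0)` and locally Lipschitz `F`. -/
theorem penalty_error_uniform_small_cost {N d : ℕ} (hN : 1 ≤ N) (hd : 2 ≤ d)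
    (γ : ℝ) (hγ : 0 < γ)
    (F : (Fin d → Fin N → ℝ) → Fin d → Fin N → ℝ)
    (hFcont : Continuous F) (hFmono : IsMonotoneSystem γ F)
    (hFlip : LocallyLipschitz F)
    (U : ℝ → Fin d → Fin N → ℝ)
    (hU : ∀ c : ℝ, 0 < c → ∀ i l, min (F (U c) i l) (U c i l - Mop c (U c) i l) = 0)
    (V : ℝ → ℝ → Fin d → Fin N → ℝ)
    (hV : ∀ c ρ : ℝ, 0 < c → 0 < ρ → ∀ i l,
      F (V c ρ) i l - ρ * ∑ j ∈ Finset.univ.erase i, max (V c ρ j l - c - V c ρ i l) 0 = 0) :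
    ∃ C₁ : ℝ, 0 < C₁ ∧ ∀ c ρ : ℝ, 0 < c → 0 < ρ → ∀ i l,
      0 ≤ U c i l - V c ρ i l ∧ U c i l - V c ρ i l ≤ C₁ * (1 / ρ + c * ρ) := by
  set K₀ : ℝ := ‖F 0‖ with hK₀def
  have hK₀ : 0 ≤ K₀ := norm_nonneg _
  set K : ℝ := K₀ / γ with hKdef
  have hK : 0 ≤ K := div_nonneg hK₀ hγ.le
  have hF0 : ∀ i l, |F 0 i l| ≤ K₀ := fun i l => comp_abs_le_norm (F 0) i l
  -- dichotomy facts from the QVI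
  have hFU0 : ∀ c, 0 < c → ∀ i l, 0 ≤ F (U c) i l := by
    intro c hc i l
    have := hU c hc i l
    have h1 := min_le_left (F (U c) i l) (U c i l - Mop c (U c) i l)
    rw [this] at h1; exact h1
  have hMU : ∀ c, 0 < c → ∀ i l, Mop c (U c) i l ≤ U c i l := by
    intro c hc i l
    have := hU c hc i l
    have h1 := min_le_right (F (U c) i l) (U c i l - Mop c (U c) i l)
    rw [this] at h1; linarith
  have hUdich : ∀ c, 0 < c → ∀ i l,
      F (U c) i l = 0 ∨ U c i l = Mop c (U c) i l := by
    intro c hc i l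
    rcases min_eq_iff.1 (hU c hc i l) with ⟨h, -⟩ | ⟨h, -⟩
    · exact Or.inl h
    · right; linarith
  -- constant-shift estimate
  have hshift : ∀ (u : Fin d → Fin N → ℝ) (b : ℝ), 0 ≤ b → ∀ i l,
      F u i l + γ * b ≤ F (fun j k => u j k + b) i l := by
    intro u b hb i l
    have := hFmono (fun j k => u j k + b) u i l (by intro j k; simp) (by simpa using hb)
    simp only [add_sub_cancel_left] at this
    linarith
  -- uniform bound on U
  have hUub : ∀ c, 0 < c → ∀ i l, U c i l ≤ K := by
    intro c hc i l
    obtain ⟨p, hp⟩ := aux_argmax hN hd (fun q => U c q.1 q.2)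
    have hil : U c i l ≤ U c p.1 p.2 := hp (i, l)
    rcases le_or_gt (U c p.1 p.2) 0 with h | h
    · linarith
    · -- the obstacle is strictly below, so F (U c) = 0 at the max
      have hobs : Mop c (U c) p.1 p.2 < U c p.1 p.2 := by
        have : Mop c (U c) p.1 p.2 ≤ U c p.1 p.2 - c :=
          Mop_le hd (fun j hj => by have := hp (j, p.2); simpa using by linarith)
        linarith
      have hF0' : F (U c) p.1 p.2 = 0 := by
        rcases hUdich c hc p.1 p.2 with h1 | h1
        · exact h1
        · exact absurd h1 (by linarith)
      have := hFmono (U c) 0 p.1 p.2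
        (by intro j k; simpa using hp (j, k)) (by simpa using h.le)
      simp only [Pi.zero_apply, sub_zero] at this
      rw [hF0'] at this
      have h2 : -F 0 p.1 p.2 ≤ K₀ := by
        have := hF0 p.1 p.2; rw [abs_le] at this; linarith
      have h3 : U c p.1 p.2 ≤ K := by
        rw [hKdef, le_div_iff₀ hγ]; nlinarith
      linarith
  have hUlb : ∀ c, 0 < c → ∀ i l, -K ≤ U c i l := by
    intro c hc i l
    obtain ⟨p, hp⟩ := aux_argmax hN hd (fun q => -U c q.1 q.2)
    have hil : -U c i l ≤ -U c p.1 p.2 := hp (i, l)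
    rcases le_or_gt (-U c p.1 p.2) 0 with h | h
    · linarith
    · have := hFmono 0 (U c) p.1 p.2
        (by intro j k; simpa using hp (j, k)) (by simpa using h.le)
      simp only [Pi.zero_apply, zero_sub] at this
      have h2 : F 0 p.1 p.2 ≤ K₀ := by
        have := hF0 p.1 p.2; rw [abs_le] at this; linarith
      have h4 := hFU0 c hc p.1 p.2
      have h3 : -U c p.1 p.2 ≤ K := by
        rw [hKdef, le_div_iff₀ hγ]; nlinarith
      linarith
  -- penalized equation facts
  have hFVeq : ∀ c ρ, 0 < c → 0 < ρ → ∀ i l,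
      F (V c ρ) i l = ρ * ∑ j ∈ Finset.univ.erase i, max (V c ρ j l - c - V c ρ i l) 0 := by
    intro c ρ hc hρ i l
    have := hV c ρ hc hρ i l; linarith
  have hFVnn : ∀ c ρ, 0 < c → 0 < ρ → ∀ i l, 0 ≤ F (V c ρ) i l := by
    intro c ρ hc hρ i l
    rw [hFVeq c ρ hc hρ i l]
    exact mul_nonneg hρ.le (Finset.sum_nonneg (fun j _ => le_max_right _ _))
  -- V ≤ U
  have hVleU : ∀ c ρ, 0 < c → 0 < ρ → ∀ i l, V c ρ i l ≤ U c i l := by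
    intro c ρ hc hρ i l
    obtain ⟨p, hp⟩ := aux_argmax hN hd (fun q => V c ρ q.1 q.2 - U c q.1 q.2)
    have hil : V c ρ i l - U c i l ≤ V c ρ p.1 p.2 - U c p.1 p.2 := hp (i, l)
    rcases le_or_gt (V c ρ p.1 p.2 - U c p.1 p.2) 0 with h | h
    · linarith
    · exfalso
      -- the penalty term vanishes at the max point
      have hpen : ∀ j, j ≠ p.1 → V c ρ j p.2 - c - V c ρ p.1 p.2 ≤ 0 := by
        intro j hj
        have h1 : V c ρ j p.2 - U c j p.2 ≤ V c ρ p.1 p.2 - U c p.1 p.2 := hp (j, p.2)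
        have h2 : U c j p.2 - c ≤ U c p.1 p.2 :=
          le_trans (le_Mop hj) (hMU c hc p.1 p.2)
        linarith
      have hFVz : F (V c ρ) p.1 p.2 = 0 := by
        rw [hFVeq c ρ hc hρ p.1 p.2]
        rw [Finset.sum_eq_zero, mul_zero]
        intro j hj
        exact max_eq_right (hpen j (Finset.ne_of_mem_erase hj))
      have := hFmono (V c ρ) (U c) p.1 p.2 (fun j k => hp (j, k)) h.le
      rw [hFVz] at this
      have h4 := hFU0 c hc p.1 p.2
      nlinarith
  -- uniform bound on V
  have hVlb : ∀ c ρ, 0 < c → 0 < ρ → ∀ i l, -K ≤ V c ρ i l := by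
    intro c ρ hc hρ i l
    obtain ⟨p, hp⟩ := aux_argmax hN hd (fun q => -V c ρ q.1 q.2)
    have hil : -V c ρ i l ≤ -V c ρ p.1 p.2 := hp (i, l)
    rcases le_or_gt (-V c ρ p.1 p.2) 0 with h | h
    · linarith
    · have := hFmono 0 (V c ρ) p.1 p.2
        (by intro j k; simpa using hp (j, k)) (by simpa using h.le)
      simp only [Pi.zero_apply, zero_sub] at this
      have h2 : F 0 p.1 p.2 ≤ K₀ := by
        have := hF0 p.1 p.2; rw [abs_le] at this; linarith
      have h4 := hFVnn c ρ hc hρ p.1 p.2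
      have h3 : -V c ρ p.1 p.2 ≤ K := by
        rw [hKdef, le_div_iff₀ hγ]; nlinarith
      linarith
  have hVbd : ∀ c ρ, 0 < c → 0 < ρ → ∀ i l, |V c ρ i l| ≤ K := by
    intro c ρ hc hρ i l
    rw [abs_le]
    exact ⟨hVlb c ρ hc hρ i l, (hVleU c ρ hc hρ i l).trans (hUub c hc i l)⟩
  -- bound for F on the ball of radius K
  obtain ⟨K₁, hK₁1, hK₁⟩ : ∃ K₁ : ℝ, 1 ≤ K₁ ∧ ∀ u : Fin d → Fin N → ℝ,
      (∀ i l, |u i l| ≤ K) → ∀ i l, |F u i l| ≤ K₁ := by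
    obtain ⟨C, hC⟩ := (isCompact_closedBall (0 : Fin d → Fin N → ℝ) K).exists_bound_of_continuousOn
      hFcont.continuousOn
    refine ⟨max C 1, le_max_right _ _, ?_⟩
    intro u hu i l
    have hmem : u ∈ closedBall (0 : Fin d → Fin N → ℝ) K := by
      rw [mem_closedBall_zero_iff]
      rw [pi_norm_le_iff_of_nonneg hK]
      intro i'
      rw [pi_norm_le_iff_of_nonneg hK]
      intro l'
      rw [Real.norm_eq_abs]
      exact hu i' l'
    calc |F u i l| ≤ ‖F u‖ := comp_abs_le_norm (F u) i l
    _ ≤ C := hC u hmem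
    _ ≤ max C 1 := le_max_left _ _
  have hK₁0 : 0 < K₁ := lt_of_lt_of_le one_pos hK₁1
  -- Lipschitz constant on the ball of radius K + 2
  obtain ⟨L, hL0, hL⟩ := locallyLipschitz_lipschitzOn_closedBall F hFlip (K + 2) (by linarith)
  -- spread estimate for V from the penalty term
  have hspread : ∀ c ρ, 0 < c → 0 < ρ → ∀ i l j,
      V c ρ j l ≤ V c ρ i l + (c + K₁ / ρ) := by
    intro c ρ hc hρ i l j
    rcases eq_or_ne j i with rfl | hj
    · have h1 : 0 ≤ K₁ / ρ := by positivity
      linarith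
    · have h1 : max (V c ρ j l - c - V c ρ i l) 0 ≤
          ∑ j' ∈ Finset.univ.erase i, max (V c ρ j' l - c - V c ρ i l) 0 :=
        Finset.single_le_sum (f := fun j' => max (V c ρ j' l - c - V c ρ i l) 0)
          (fun j' _ => le_max_right _ _) (Finset.mem_erase.2 ⟨hj, Finset.mem_univ j⟩)
      have h2 : ρ * max (V c ρ j l - c - V c ρ i l) 0 ≤ K₁ := by
        calc ρ * max (V c ρ j l - c - V c ρ i l) 0 ≤
            ρ * ∑ j' ∈ Finset.univ.erase i, max (V c ρ j' l - c - V c ρ i l) 0 :=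
              mul_le_mul_of_nonneg_left h1 hρ.le
        _ = F (V c ρ) i l := (hFVeq c ρ hc hρ i l).symm
        _ ≤ |F (V c ρ) i l| := le_abs_self _
        _ ≤ K₁ := hK₁ _ (hVbd c ρ hc hρ) i l
      have h3 : V c ρ j l - c - V c ρ i l ≤ K₁ / ρ := by
        have hx : max (V c ρ j l - c - V c ρ i l) 0 ≤ K₁ / ρ := by
          rw [le_div_iff₀ hρ, mul_comm]; exact h2
        exact le_trans (le_max_left _ _) hx
      linarith
  -- comparison principle: U c lies below any supersolution
  have hcompare : ∀ c, 0 < c → ∀ W : Fin d → Fin N → ℝ,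
      (∀ i l, 0 ≤ F W i l) → (∀ i l j, W j l - c ≤ W i l) →
      ∀ i l, U c i l ≤ W i l := by
    intro c hc W hWF hWobs i l
    obtain ⟨p, hp⟩ := aux_argmax hN hd (fun q => U c q.1 q.2 - W q.1 q.2)
    set m : ℝ := U c p.1 p.2 - W p.1 p.2 with hmdef
    have hil : U c i l - W i l ≤ m := hp (i, l)
    rcases le_or_gt m 0 with h | h
    · linarith
    · exfalso
      -- single step of the chain
      have hstep : ∀ j, U c j p.2 - W j p.2 = m →
          ∃ j', U c j' p.2 - W j' p.2 = m ∧ U c j' p.2 = U c j p.2 + c := by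
        intro j hj
        have hmax := hFmono (U c) W j p.2
          (by intro j' k'; rw [hj]; exact hp (j', k')) (by rw [hj]; exact h.le)
        rw [hj] at hmax
        have hFU : 0 < F (U c) j p.2 := by
          have := hWF j p.2
          nlinarith
        have hobs : U c j p.2 = Mop c (U c) j p.2 := by
          rcases hUdich c hc j p.2 with h1 | h1
          · exact absurd h1 (by linarith)
          · exact h1
        obtain ⟨j', hj'ne, hj'⟩ := Mop_attained hd c (U c) j p.2
        have hUj' : U c j' p.2 = U c j p.2 + c := by rw [hobs, hj']; ring
        have hWj' : W j' p.2 - c ≤ W j p.2 := hWobs j p.2 j'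
        have h1 : m ≤ U c j' p.2 - W j' p.2 := by
          rw [hUj']
          have := hj
          linarith
        have h2 : U c j' p.2 - W j' p.2 ≤ m := hp (j', p.2)
        exact ⟨j', le_antisymm h2 h1, hUj'⟩
      -- iterate the chain
      have hchain : ∀ n : ℕ, ∃ j, U c j p.2 - W j p.2 = m ∧
          U c j p.2 = U c p.1 p.2 + n * c := by
        intro n
        induction n with
        | zero => exact ⟨p.1, rfl, by simp⟩
        | succ n ih =>
            obtain ⟨j, hj1, hj2⟩ := ih
            obtain ⟨j', hj'1, hj'2⟩ := hstep j hj1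
            exact ⟨j', hj'1, by rw [hj'2, hj2]; push_cast; ring⟩
      obtain ⟨j, -, hj2⟩ := hchain (⌈(2 * K + 1) / c⌉₊)
      have h1 : (2 * K + 1) / c ≤ (⌈(2 * K + 1) / c⌉₊ : ℝ) := Nat.le_ceil _
      have h2 : 2 * K + 1 ≤ (⌈(2 * K + 1) / c⌉₊ : ℝ) * c := by
        rw [← div_le_iff₀ hc]; exact h1
      have h3 := hUub c hc j p.2
      have h4 := hUlb c hc p.1 p.2
      rw [hj2] at h3
      linarith
  -- the good-region estimate
  set ε : ℝ := min 1 (γ / (L + γ + 1)) with hεdef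
  have hε0 : 0 < ε := lt_min one_pos (div_pos hγ (by linarith))
  have hε1 : ε ≤ 1 := min_le_left _ _
  have hgood : ∀ c ρ, 0 < c → 0 < ρ → c + K₁ / ρ ≤ ε → ∀ i l,
      U c i l - V c ρ i l ≤ (1 + L / γ) * (c + K₁ / ρ) := by
    intro c ρ hc hρ hsmall i l
    haveI : Nonempty (Fin d) := ⟨⟨0, by omega⟩⟩
    set D : ℝ := c + K₁ / ρ with hDdef
    have hD0 : 0 < D := by
      rw [hDdef]
      have h9 : 0 < K₁ / ρ := by positivity
      linarith
    set a : ℝ := L * D / γ with hadef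
    have ha0 : 0 ≤ a := by positivity
    have hDε : D ≤ γ / (L + γ + 1) := le_trans hsmall (min_le_right _ _)
    have hDγ : D * (L + γ + 1) ≤ γ := by
      rw [← le_div_iff₀ (by linarith : (0:ℝ) < L + γ + 1)]; exact hDε
    have ha1 : a ≤ 1 := by
      rw [hadef, div_le_one hγ]; nlinarith
    set Sl : Fin N → ℝ := fun l' => ⨆ j, V c ρ j l' with hSldef
    have hSge : ∀ (i' : Fin d) (l' : Fin N), V c ρ i' l' ≤ Sl l' := fun i' l' =>
      le_ciSup (f := fun j => V c ρ j l') (Set.Finite.bddAbove (Set.finite_range _)) i'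
    have hSle : ∀ (i' : Fin d) (l' : Fin N), Sl l' ≤ V c ρ i' l' + D := fun i' l' =>
      ciSup_le (fun j => hspread c ρ hc hρ i' l' j)
    have hSbd : ∀ l', |Sl l'| ≤ K := by
      intro l'
      rw [abs_le]
      constructor
      · have h1 := hVbd c ρ hc hρ ⟨0, by omega⟩ l'
        rw [abs_le] at h1
        exact le_trans h1.1 (hSge _ _)
      · exact ciSup_le (fun j => (abs_le.1 (hVbd c ρ hc hρ j l')).2)
    set W : Fin d → Fin N → ℝ := fun _ l' => Sl l' + a with hWdef
    set Va : Fin d → Fin N → ℝ := fun j k => V c ρ j k + a with hVadef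
    have hmemW : W ∈ closedBall (0 : Fin d → Fin N → ℝ) (K + 2) := by
      rw [mem_closedBall_zero_iff, pi_norm_le_iff_of_nonneg (by linarith)]
      intro i'
      rw [pi_norm_le_iff_of_nonneg (by linarith)]
      intro l'
      rw [Real.norm_eq_abs]
      calc |Sl l' + a| ≤ |Sl l'| + |a| := abs_add_le _ _
      _ ≤ K + 2 := by
          rw [abs_of_nonneg ha0]
          have := hSbd l'
          linarith
    have hmemVa : Va ∈ closedBall (0 : Fin d → Fin N → ℝ) (K + 2) := by
      rw [mem_closedBall_zero_iff, pi_norm_le_iff_of_nonneg (by linarith)]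
      intro i'
      rw [pi_norm_le_iff_of_nonneg (by linarith)]
      intro l'
      rw [Real.norm_eq_abs]
      calc |V c ρ i' l' + a| ≤ |V c ρ i' l'| + |a| := abs_add_le _ _
      _ ≤ K + 2 := by
          rw [abs_of_nonneg ha0]
          have := hVbd c ρ hc hρ i' l'
          linarith
    have hdWVa : dist W Va ≤ D := by
      rw [dist_pi_le_iff hD0.le]
      intro i'
      rw [dist_pi_le_iff hD0.le]
      intro l'
      rw [Real.dist_eq]
      have h1 := hSge i' l'
      have h2 := hSle i' l'
      rw [abs_le]
      constructor <;> simp only [hWdef, hVadef] <;> [linarith; linarith]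
    have hFd : dist (F W) (F Va) ≤ L * D :=
      le_trans (hL W hmemW Va hmemVa)
        (mul_le_mul_of_nonneg_left hdWVa hL0)
    have hFcomp : ∀ i' l', |F W i' l' - F Va i' l'| ≤ L * D := by
      intro i' l'
      calc |F W i' l' - F Va i' l'| = dist (F W i' l') (F Va i' l') := (Real.dist_eq _ _).symm
      _ ≤ dist (F W i') (F Va i') := dist_le_pi_dist (F W i') (F Va i') l'
      _ ≤ dist (F W) (F Va) := dist_le_pi_dist (F W) (F Va) i'
      _ ≤ L * D := hFd
    have hγa : γ * a = L * D := by rw [hadef]; field_simp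
    have hFW : ∀ i' l', 0 ≤ F W i' l' := by
      intro i' l'
      have h1 : F (V c ρ) i' l' + γ * a ≤ F Va i' l' := hshift (V c ρ) a ha0 i' l'
      have h2 := hFVnn c ρ hc hρ i' l'
      have h3 := hFcomp i' l'
      rw [abs_le] at h3
      rw [hγa] at h1
      linarith [h3.1]
    have hWobs : ∀ i' l' j, W j l' - c ≤ W i' l' := by
      intro i' l' j
      simp only [hWdef]
      linarith
    have hUW := hcompare c hc W hFW hWobs i l
    have h5 : W i l ≤ V c ρ i l + D + a := by
      simp only [hWdef]
      have := hSle i l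
      linarith
    have h6 : D + a = (1 + L / γ) * D := by rw [hadef]; field_simp
    calc U c i l - V c ρ i l ≤ W i l - V c ρ i l := by linarith
    _ ≤ D + a := by linarith
    _ = (1 + L / γ) * D := h6
  -- assembling the constant
  set η : ℝ := min (ε / 2) (ε / (2 * K₁)) with hηdef
  have hη0 : 0 < η := lt_min (by linarith) (div_pos hε0 (by linarith))
  set A : ℝ := (1 + L / γ) * (1 + K₁) with hAdef
  have hA0 : 0 < A := by positivity
  refine ⟨max A (2 * K / η) + 1, by positivity, ?_⟩
  intro c ρ hc hρ i l
  have hq0 : 0 ≤ 1 / ρ + c * ρ := by positivity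
  have hC₁ : ∀ B : ℝ, B ≤ max A (2 * K / η) → B * (1 / ρ + c * ρ) ≤
      (max A (2 * K / η) + 1) * (1 / ρ + c * ρ) := by
    intro B hB
    exact mul_le_mul_of_nonneg_right (by linarith) hq0
  constructor
  · linarith [hVleU c ρ hc hρ i l]
  · rcases le_or_gt (c + K₁ / ρ) ε with hsmall | hbig
    · -- good region
      have h1 := hgood c ρ hc hρ hsmall i l
      have hcle : c ≤ 1 / ρ + c * ρ := by
        rcases le_or_gt 1 ρ with h | h
        · have : c ≤ c * ρ := le_mul_of_one_le_right hc.le h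
          have h2 : 0 ≤ 1 / ρ := by positivity
          linarith
        · have h2 : 1 ≤ 1 / ρ := (le_div_iff₀ hρ).2 (by linarith)
          have hc1 : c ≤ 1 := by
            have : 0 ≤ K₁ / ρ := by positivity
            linarith
          have h3 : 0 ≤ c * ρ := by positivity
          linarith
      have hdle : K₁ / ρ ≤ K₁ * (1 / ρ + c * ρ) := by
        rw [div_eq_mul_one_div]
        exact mul_le_mul_of_nonneg_left (le_add_of_nonneg_right (by positivity)) (by linarith)
      have h2 : (1 + L / γ) * (c + K₁ / ρ) ≤ A * (1 / ρ + c * ρ) := by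
        rw [hAdef]
        have h3 : 0 ≤ 1 + L / γ := by positivity
        calc (1 + L / γ) * (c + K₁ / ρ) ≤ (1 + L / γ) * ((1 / ρ + c * ρ) + K₁ * (1 / ρ + c * ρ)) :=
              mul_le_mul_of_nonneg_left (by linarith) h3
        _ = (1 + L / γ) * (1 + K₁) * (1 / ρ + c * ρ) := by ring
      exact le_trans h1 (h2.trans (hC₁ A (le_max_left _ _)))
    · -- bad region: use the trivial bound
      have htriv : U c i l - V c ρ i l ≤ 2 * K := by
        have := hUub c hc i l
        have := hVlb c ρ hc hρ i l
        linarith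
      have hqη : η ≤ 1 / ρ + c * ρ := by
        rcases le_or_gt c (ε / 2) with h | h
        · -- then K₁ / ρ > ε / 2, so 1/ρ > ε/(2K₁)
          have h2 : ε / 2 < K₁ / ρ := by linarith
          have h3 : ε / (2 * K₁) < 1 / ρ := by
            rw [div_lt_div_iff₀ (by linarith) hρ] at h2
            rw [div_lt_div_iff₀ (by linarith) hρ]
            linarith
          have h4 : 0 ≤ c * ρ := by positivity
          have := min_le_right (ε / 2) (ε / (2 * K₁))
          rw [hηdef]; linarith
        · rcases le_or_gt 1 ρ with h5 | h5
          · have h6 : ε / 2 < c * ρ := lt_of_lt_of_le h (le_mul_of_one_le_right hc.le h5)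
            have h7 : 0 ≤ 1 / ρ := by positivity
            have := min_le_left (ε / 2) (ε / (2 * K₁))
            rw [hηdef]; linarith
          · have h6 : 1 ≤ 1 / ρ := (le_div_iff₀ hρ).2 (by linarith)
            have h7 : 0 ≤ c * ρ := by positivity
            have := min_le_left (ε / 2) (ε / (2 * K₁))
            rw [hηdef]; linarith
      have h8 : 2 * K ≤ (2 * K / η) * (1 / ρ + c * ρ) := by
        rw [div_mul_eq_mul_div, le_div_iff₀ hη0]
        exact mul_le_mul_of_nonneg_left hqη (by linarith)
      exact htriv.trans (h8.trans (hC₁ _ (le_max_right _ _)))
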